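/- Let R be a commutative ring, q ∈ R, and x ∈ R. For all natural numbers n and m, the q-Bell polynomials satisfy the q-analogue of Spivey's formula: B_{n+m,q}(x) = \sum_{j=0}^{m} \sum_{k=0}^{n} S_q(m,j) * C(n,k) * ([j]_q)^{n-k} * q^{j*k} * x^j * B_{k,q}(x) (with the convention 0^0 = 1). (This is equation (result1) of the paper, where the symbol [x]_{q,j} on the coherent state denotes x^j.) -/

import Mathlib

/-- The q-integer [n]_q. -/
def qInt {R : Type*} [CommRing R] (q : R) (n : ℕ) : R :=
  ∑ i ∈ Finset.range n, q ^ i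

/-- The q-Stirling numbers of the second kind. -/
def qStirling {R : Type*} [CommRing R] (q : R) : ℕ → ℕ → R
  | 0, 0 => 1
  | 0, _ + 1 => 0
  | _ + 1, 0 => 0
  | n + 1, k + 1 => q ^ k * qStirling q n k + qInt q (k + 1) * qStirling q n (k + 1)

/-- The q-Bell polynomials. -/
def qBellPoly {R : Type*} [CommRing R] (q x : R) (n : ℕ) : R :=
  ∑ k ∈ Finset.range (n + 1), qStirling q n k * x ^ k

section Aux

variable {R : Type*} [CommRing R] (q x : R)

lemma qInt_add (a b : ℕ) : qInt q (a + b) = qInt q a + q ^ a * qInt q b := by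
  simp only [qInt, Finset.sum_range_add, pow_add, Finset.mul_sum]

lemma qStirling_eq_zero : ∀ n k : ℕ, n < k → qStirling q (n) k = 0 := by
  intro n
  induction n with
  | zero => intro k hk; match k, hk with
    | k + 1, _ => rfl
  | succ n ih =>
    intro k hk
    match k, hk with
    | k + 1, hk =>
      show q ^ k * qStirling q n k + qInt q (k + 1) * qStirling q n (k + 1) = 0
      rw [ih k (by omega), ih (k+1) (by omega)]
      ring

/-- Generalized (shifted) q-Stirling coefficients: the normal-ordering
coefficients of `w^n (a†)^j a^j` in the q-boson algebra. -/
def cC {R : Type*} [CommRing R] (q : R) (j : ℕ) : ℕ → ℕ → R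
  | 0, i => if i = j then 1 else 0
  | _ + 1, 0 => 0
  | n + 1, i + 1 => q ^ i * cC q j n i + qInt q (i + 1) * cC q j n (i + 1)

lemma cC_eq_zero (j : ℕ) : ∀ n i : ℕ, i < j → cC q j n i = 0 := by
  intro n
  induction n with
  | zero => intro i hi; simp [cC, Nat.ne_of_lt hi]
  | succ n ih =>
    intro i hi
    match i with
    | 0 => rfl
    | i + 1 =>
      show q ^ i * cC q j n i + qInt q (i + 1) * cC q j n (i + 1) = 0
      rw [ih i (by omega), ih (i+1) (by omega)]
      ring

/-- The binomial-type expansion coefficients. -/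
def dD {R : Type*} [CommRing R] (q : R) (j n i : ℕ) : R :=
  ∑ k ∈ Finset.range (n + 1),
    (Nat.choose n k : R) * q ^ (j * k) * (qInt q j) ^ (n - k) * qStirling q k i

lemma dD_succ (j n i : ℕ) :
    dD q j (n + 1) i = qInt q j * dD q j n i +
      q ^ j * ∑ k ∈ Finset.range (n + 1),
        (Nat.choose n k : R) * q ^ (j * k) * (qInt q j) ^ (n - k) * qStirling q (k + 1) i := by
  have h1 : ∀ k ∈ Finset.range (n+1),
      ((Nat.choose (n+1) (k+1) : R)) * q ^ (j * (k+1)) * (qInt q j) ^ (n + 1 - (k+1)) *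
          qStirling q (k+1) i
      = (Nat.choose n (k+1) : R) * q ^ (j * (k+1)) * (qInt q j) ^ (n + 1 - (k+1)) *
          qStirling q (k+1) i
        + q ^ j * ((Nat.choose n k : R) * q ^ (j * k) * (qInt q j) ^ (n - k) *
          qStirling q (k+1) i) := by
    intro k hk
    rw [Nat.choose_succ_succ', Nat.cast_add]
    rw [show n + 1 - (k+1) = n - k from by omega, Nat.mul_succ, pow_add]
    ring
  rw [dD, Finset.sum_range_succ']
  rw [Finset.sum_congr rfl h1, Finset.sum_add_distrib, ← Finset.mul_sum]
  rw [add_right_comm]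
  have e0 : ((Nat.choose (n+1) 0 : ℕ) : R) * q ^ (j * 0) * (qInt q j) ^ (n + 1 - 0) *
      qStirling q 0 i
      = (fun k => ((Nat.choose n k : ℕ) : R) * q ^ (j * k) * (qInt q j) ^ (n + 1 - k) *
        qStirling q k i) 0 := by norm_num
  rw [e0, ← Finset.sum_range_succ' (fun k => ((Nat.choose n k : ℕ) : R) * q ^ (j * k) *
    (qInt q j) ^ (n + 1 - k) * qStirling q k i) (n+1)]
  rw [Finset.sum_range_succ]
  rw [Nat.choose_succ_self, Nat.cast_zero]
  have h2 : ∀ k ∈ Finset.range (n+1),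
      ((Nat.choose n k : ℕ) : R) * q ^ (j * k) * (qInt q j) ^ (n + 1 - k) * qStirling q k i
      = qInt q j * (((Nat.choose n k : ℕ) : R) * q ^ (j * k) * (qInt q j) ^ (n - k) *
        qStirling q k i) := by
    intro k hk
    rw [Finset.mem_range] at hk
    rw [show n + 1 - k = (n - k) + 1 from by omega, pow_succ]
    ring
  rw [Finset.sum_congr rfl h2, ← Finset.mul_sum, dD]
  ring

lemma cC_shift (j : ℕ) : ∀ n i : ℕ, cC q j n (j + i) = dD q j n i := by
  intro n
  induction n with
  | zero =>
    intro i
    rw [dD, Finset.sum_range_one]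
    cases i with
    | zero => simp [cC, qStirling]
    | succ i =>
      have h : j + (i + 1) ≠ j := by omega
      simp [cC, qStirling, h]
  | succ n ih =>
    intro i
    rw [dD_succ]
    cases i with
    | zero =>
      have hz : ∑ k ∈ Finset.range (n+1),
          (Nat.choose n k : R) * q ^ (j*k) * (qInt q j) ^ (n-k) * qStirling q (k+1) 0 = 0 := by
        apply Finset.sum_eq_zero
        intro k hk
        have : qStirling q (k+1) 0 = 0 := rfl
        rw [this]; ring
      rw [hz, mul_zero]
      cases j with
      | zero =>
        rw [show cC q 0 (n+1) (0+0) = 0 from rfl, show qInt q 0 = 0 from by simp [qInt]]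
        ring
      | succ j' =>
        show q ^ j' * cC q (j'+1) n j' + qInt q (j'+1) * cC q (j'+1) n (j'+1) = _
        rw [cC_eq_zero q (j'+1) n j' (by omega)]
        have h0 := ih 0
        rw [show j' + 1 + 0 = j' + 1 from rfl] at h0
        rw [h0]; ring
    | succ i =>
      have hsplit : ∑ k ∈ Finset.range (n+1),
          (Nat.choose n k : R) * q ^ (j*k) * (qInt q j) ^ (n-k) * qStirling q (k+1) (i+1)
          = q ^ i * dD q j n i + qInt q (i+1) * dD q j n (i+1) := by
        rw [dD, dD, Finset.mul_sum, Finset.mul_sum, ← Finset.sum_add_distrib]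
        apply Finset.sum_congr rfl
        intro k hk
        have : qStirling q (k+1) (i+1)
            = q ^ i * qStirling q k i + qInt q (i+1) * qStirling q k (i+1) := rfl
        rw [this]; ring
      rw [hsplit]
      show q ^ (j+i) * cC q j n (j+i) + qInt q (j+i+1) * cC q j n (j+i+1) = _
      rw [ih i, show j + i + 1 = j + (i+1) from rfl, ih (i+1), qInt_add q j (i+1), pow_add]
      ring

lemma stirling_conv (m : ℕ) : ∀ n i : ℕ,
    qStirling q (n + m) i = ∑ j ∈ Finset.range (m + 1), qStirling q m j * cC q j n i := by
  intro n
  induction n with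
  | zero =>
    intro i
    rw [Nat.zero_add]
    have h : ∀ j ∈ Finset.range (m+1), qStirling q m j * cC q j 0 i
        = if i = j then qStirling q m j else 0 := by
      intro j hj
      rw [show cC q j 0 i = if i = j then 1 else 0 from rfl]
      split <;> ring
    rw [Finset.sum_congr rfl h,
      Finset.sum_ite_eq (Finset.range (m+1)) i (fun j => qStirling q m j)]
    split
    · rfl
    · next hmem =>
      rw [Finset.mem_range, not_lt] at hmem
      exact qStirling_eq_zero q m i (by omega)
  | succ n ih =>
    intro i
    rw [show n + 1 + m = (n + m) + 1 from by omega]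
    cases i with
    | zero =>
      rw [show qStirling q (n+m+1) 0 = 0 from rfl]
      symm
      apply Finset.sum_eq_zero
      intro j hj
      rw [show cC q j (n+1) 0 = 0 from rfl]
      ring
    | succ i =>
      rw [show qStirling q (n+m+1) (i+1)
          = q ^ i * qStirling q (n+m) i + qInt q (i+1) * qStirling q (n+m) (i+1) from rfl]
      rw [ih i, ih (i+1), Finset.mul_sum, Finset.mul_sum, ← Finset.sum_add_distrib]
      apply Finset.sum_congr rfl
      intro j hj
      rw [show cC q j (n+1) (i+1)
          = q ^ i * cC q j n i + qInt q (i+1) * cC q j n (i+1) from rfl]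
      ring

end Aux

/-- q-analogue of Spivey's Bell number formula for q-Bell polynomials. -/
theorem spivey_qBell_poly {R : Type*} [CommRing R] (q x : R) (n m : ℕ) :
    qBellPoly q x (n + m) =
      ∑ j ∈ Finset.range (m + 1), ∑ k ∈ Finset.range (n + 1),
        qStirling q m j * (Nat.choose n k : R) * (qInt q j) ^ (n - k) * q ^ (j * k) *
          x ^ j * qBellPoly q x k := by
  rw [qBellPoly]
  have h1 : ∀ i ∈ Finset.range (n+m+1), qStirling q (n+m) i * x ^ i
      = ∑ j ∈ Finset.range (m+1), qStirling q m j * cC q j n i * x ^ i := by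
    intro i _
    rw [stirling_conv q m n i, Finset.sum_mul]
  rw [Finset.sum_congr rfl h1, Finset.sum_comm]
  apply Finset.sum_congr rfl
  intro j hj
  have hj' : j ≤ m := by rw [Finset.mem_range] at hj; omega
  have key : ∑ i ∈ Finset.range (n+m+1), cC q j n i * x ^ i
      = ∑ k ∈ Finset.range (n+1), (Nat.choose n k : R) * (qInt q j) ^ (n-k) * q ^ (j*k) *
          x ^ j * qBellPoly q x k := by
    have e1 : ∑ i ∈ Finset.range (n+m+1), cC q j n i * x ^ i
        = ∑ i ∈ Finset.Ico j (n+m+1), cC q j n i * x ^ i := by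
      symm
      apply Finset.sum_subset
      · intro i hi
        rw [Finset.mem_Ico] at hi
        rw [Finset.mem_range]
        omega
      · intro i hi hni
        rw [Finset.mem_range] at hi
        rw [Finset.mem_Ico, not_and_or, not_le] at hni
        have hilt : i < j := by omega
        rw [cC_eq_zero q j n i hilt]
        ring
    rw [e1, Finset.sum_Ico_eq_sum_range]
    have e2 : ∀ i ∈ Finset.range (n+m+1-j), cC q j n (j+i) * x ^ (j+i)
        = ∑ k ∈ Finset.range (n+1), (Nat.choose n k : R) * q ^ (j*k) *
            (qInt q j) ^ (n-k) * (qStirling q k i * (x ^ j * x ^ i)) := by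
      intro i _
      rw [cC_shift, dD, Finset.sum_mul, pow_add]
      apply Finset.sum_congr rfl
      intro k _
      ring
    rw [Finset.sum_congr rfl e2, Finset.sum_comm]
    apply Finset.sum_congr rfl
    intro k hk
    rw [Finset.mem_range] at hk
    have e3 : ∑ i ∈ Finset.range (n+m+1-j), qStirling q k i * x ^ i
        = ∑ i ∈ Finset.range (k+1), qStirling q k i * x ^ i := by
      symm
      apply Finset.sum_subset
      · intro i hi
        rw [Finset.mem_range] at hi ⊢
        omega
      · intro i _ hni
        rw [Finset.mem_range, not_lt] at hni
        rw [qStirling_eq_zero q k i (by omega)]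
        ring
    have e4 : ∀ i ∈ Finset.range (n+m+1-j),
        (Nat.choose n k : R) * q ^ (j*k) * (qInt q j) ^ (n-k) *
          (qStirling q k i * (x ^ j * x ^ i))
        = ((Nat.choose n k : R) * q ^ (j*k) * (qInt q j) ^ (n-k) * x ^ j) *
          (qStirling q k i * x ^ i) := by
      intro i _
      ring
    rw [Finset.sum_congr rfl e4, ← Finset.mul_sum, e3, qBellPoly]
    ring
  calc ∑ i ∈ Finset.range (n+m+1), qStirling q m j * cC q j n i * x ^ i
      = qStirling q m j * ∑ i ∈ Finset.range (n+m+1), cC q j n i * x ^ i := by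
        rw [Finset.mul_sum]
        exact Finset.sum_congr rfl (fun i _ => by ring)
    _ = ∑ k ∈ Finset.range (n+1), qStirling q m j * (Nat.choose n k : R) *
          (qInt q j) ^ (n - k) * q ^ (j * k) * x ^ j * qBellPoly q x k := by
        rw [key, Finset.mul_sum]
        exact Finset.sum_congr rfl (fun k _ => by ring)
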